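/- The closed unit ball of the operator norm on Mₙ (n×n complex matrices) is the convex hull of the set of unitary matrices in Mₙ. -/

import Mathlib

open scoped Matrix.Norms.L2Operator

section RussoDyeAux

open scoped ComplexOrder
open Matrix Filter Bornology

namespace RussoDyeAux

variable {n : ℕ}

/-- An invertible contraction is the mean of two unitaries. -/
lemma mean_of_unitaries {A : Matrix (Fin n) (Fin n) ℂ} (hn : 0 < n)
    (hA : ‖A‖ ≤ 1) (hU : IsUnit A) :
    ∃ U ∈ Matrix.unitaryGroup (Fin n) ℂ, ∃ W ∈ Matrix.unitaryGroup (Fin n) ℂ,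
      A = (1/2 : ℝ) • U + (1/2 : ℝ) • W := by
  haveI : Nonempty (Fin n) := Fin.pos_iff_nonempty.mp hn
  set B : Matrix (Fin n) (Fin n) ℂ := Aᴴ * A with hBdef
  have hBsd : B.PosSemidef := posSemidef_conjTranspose_mul_self A
  have hH : B.IsHermitian := hBsd.1
  set μ : Fin n → ℝ := hH.eigenvalues with hμdef
  have hμ0 : ∀ j, 0 ≤ μ j := fun j => hBsd.eigenvalues_nonneg j
  have hdet : det B ≠ 0 := by
    have : IsUnit (det A) := hU.map (detMonoidHom (n := Fin n) (R := ℂ))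
    have h2 : det B = star (det A) * det A := by
      simp [hBdef, det_mul, det_conjTranspose]
    simp only [h2]
    exact mul_ne_zero (star_ne_zero.mpr this.ne_zero) this.ne_zero
  have hμne : ∀ j, μ j ≠ 0 := by
    intro j hj
    apply hdet
    rw [hH.det_eq_prod_eigenvalues]
    exact Finset.prod_eq_zero (Finset.mem_univ j)
      (by rw [show hH.eigenvalues j = μ j from rfl, hj]; simp)
  have hμle : ∀ j, μ j ≤ 1 := by
    intro j
    have hmem : μ j ∈ spectrum ℝ B := hH.eigenvalues_mem_spectrum_real j
    have hle : ‖μ j‖ ≤ ‖B‖ := spectrum.norm_le_norm_of_mem hmem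
    have hB1 : ‖B‖ ≤ 1 := by
      rw [hBdef, l2_opNorm_conjTranspose_mul_self]
      exact mul_le_one₀ hA (norm_nonneg A) hA
    calc μ j ≤ ‖μ j‖ := le_abs_self _
    _ ≤ ‖B‖ := hle
    _ ≤ 1 := hB1
  -- the unitary diagonalizing B
  set V : Matrix (Fin n) (Fin n) ℂ := (hH.eigenvectorUnitary : Matrix (Fin n) (Fin n) ℂ)
    with hVdef
  have hV1 : V * star V = 1 := Matrix.mem_unitaryGroup_iff.mp hH.eigenvectorUnitary.2
  have hV2 : star V * V = 1 := Matrix.mem_unitaryGroup_iff'.mp hH.eigenvectorUnitary.2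
  have hspec' : Aᴴ * A = V * diagonal (RCLike.ofReal ∘ μ) * star V := by
    rw [← hBdef]; exact hH.spectral_theorem
  -- the weights
  set w : Fin n → ℂ := fun j => 1 + (Real.sqrt (1 - μ j) / Real.sqrt (μ j)) * Complex.I
    with hwdef
  have hw_mul : ∀ j, (starRingEnd ℂ) (w j) * w j = (μ j : ℂ)⁻¹ := by
    intro j
    rw [mul_comm, Complex.mul_conj]
    have : Complex.normSq (w j) = 1 + (Real.sqrt (1 - μ j) / Real.sqrt (μ j)) ^ 2 := by
      simpa using Complex.normSq_add_mul_I 1 (Real.sqrt (1 - μ j) / Real.sqrt (μ j))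
    rw [this]
    have h1 : Real.sqrt (1 - μ j) ^ 2 = 1 - μ j := Real.sq_sqrt (by linarith [hμle j])
    have h2 : Real.sqrt (μ j) ^ 2 = μ j := Real.sq_sqrt (hμ0 j)
    have h3 : (1 : ℝ) + (Real.sqrt (1 - μ j) / Real.sqrt (μ j)) ^ 2 = (μ j)⁻¹ := by
      have hne := hμne j
      rw [div_pow, h1, h2]
      field_simp
      ring
    rw [h3]
    push_cast [Complex.ofReal_inv]
    ring
  have hw_sum : ∀ j, w j + (starRingEnd ℂ) (w j) = 2 := by
    intro j
    rw [Complex.add_conj]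
    norm_num [hwdef]
  -- product of conjugated diagonals
  have key : ∀ x y : Fin n → ℂ, (V * diagonal x * star V) * (V * diagonal y * star V)
      = V * diagonal (fun j => x j * y j) * star V := by
    intro x y
    calc (V * diagonal x * star V) * (V * diagonal y * star V)
        = V * (diagonal x * ((star V * V) * (diagonal y * star V))) := by
          simp only [Matrix.mul_assoc]
      _ = V * (diagonal x * (diagonal y * star V)) := by rw [hV2, one_mul]
      _ = V * diagonal (fun j => x j * y j) * star V := by
          rw [← diagonal_mul_diagonal]
          simp only [Matrix.mul_assoc]
  have hstar : ∀ x : Fin n → ℂ, star (V * diagonal x * star V)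
      = V * diagonal (fun j => (starRingEnd ℂ) (x j)) * star V := by
    intro x
    rw [StarMul.star_mul, StarMul.star_mul, star_star,
      Matrix.star_eq_conjTranspose (diagonal x), diagonal_conjTranspose]
    simp only [Matrix.mul_assoc]
    rfl
  -- membership criterion
  have unit_of : ∀ x : Fin n → ℂ, (∀ j, (starRingEnd ℂ) (x j) * x j = (μ j : ℂ)⁻¹) →
      A * (V * diagonal x * star V) ∈ Matrix.unitaryGroup (Fin n) ℂ := by
    intro x hx
    rw [Matrix.mem_unitaryGroup_iff']
    calc star (A * (V * diagonal x * star V)) * (A * (V * diagonal x * star V))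
        = star (V * diagonal x * star V) * (Aᴴ * A) * (V * diagonal x * star V) := by
          rw [StarMul.star_mul, Matrix.star_eq_conjTranspose A]
          simp only [Matrix.mul_assoc]
      _ = (V * diagonal (fun j => (starRingEnd ℂ) (x j)) * star V)
            * (V * diagonal (RCLike.ofReal ∘ μ) * star V) * (V * diagonal x * star V) := by
          rw [hstar, hspec']
      _ = V * diagonal (fun j => ((starRingEnd ℂ) (x j) * (RCLike.ofReal ∘ μ) j) * x j)
            * star V := by rw [key, key]
      _ = 1 := by
          have : (fun j => ((starRingEnd ℂ) (x j) * (RCLike.ofReal ∘ μ) j) * x j)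
              = fun _ => (1 : ℂ) := by
            funext j
            have hcast : ((RCLike.ofReal ∘ μ) j : ℂ) = (μ j : ℂ) := rfl
            rw [hcast, mul_comm ((starRingEnd ℂ) (x j)) ((μ j : ℂ)), mul_assoc, hx j]
            exact mul_inv_cancel₀ (by exact_mod_cast hμne j)
          rw [this, diagonal_one, Matrix.mul_one, hV1]
  refine ⟨A * (V * diagonal w * star V), unit_of w hw_mul,
    A * (V * diagonal (fun j => (starRingEnd ℂ) (w j)) * star V), unit_of _ ?_, ?_⟩
  · intro j
    rw [Complex.conj_conj, mul_comm]
    exact hw_mul j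
  · have hdiag : diagonal w + diagonal (fun j => (starRingEnd ℂ) (w j))
        = (2 : ℂ) • (1 : Matrix (Fin n) (Fin n) ℂ) := by
      rw [diagonal_add]
      rw [show (fun j => w j + (starRingEnd ℂ) (w j)) = fun _ => (2 : ℂ) from funext hw_sum]
      rw [Matrix.smul_one_eq_diagonal]
    have hsum : A * (V * diagonal w * star V)
        + A * (V * diagonal (fun j => (starRingEnd ℂ) (w j)) * star V) = (2 : ℂ) • A := by
      rw [← Matrix.mul_add, ← Matrix.add_mul, ← Matrix.mul_add, hdiag]
      rw [Matrix.mul_smul, Matrix.mul_one, Matrix.smul_mul, hV1,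
        Matrix.mul_smul, Matrix.mul_one]
    rw [← smul_add, hsum, ← smul_assoc]
    norm_num [Complex.real_smul]

/-- The set of unitary matrices is compact. -/
lemma isCompact_unitary (hn : 0 < n) :
    IsCompact {A : Matrix (Fin n) (Fin n) ℂ | A ∈ Matrix.unitaryGroup (Fin n) ℂ} := by
  haveI : Nonempty (Fin n) := Fin.pos_iff_nonempty.mp hn
  have hiso : Isometry (star : Matrix (Fin n) (Fin n) ℂ → Matrix (Fin n) (Fin n) ℂ) :=
    Isometry.of_dist_eq fun x y => by
      rw [dist_eq_norm, dist_eq_norm, ← star_sub, Matrix.star_eq_conjTranspose,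
        l2_opNorm_conjTranspose]
  have hclosed : IsClosed {A : Matrix (Fin n) (Fin n) ℂ | A ∈ Matrix.unitaryGroup (Fin n) ℂ} := by
    have heq : {A : Matrix (Fin n) (Fin n) ℂ | A ∈ Matrix.unitaryGroup (Fin n) ℂ}
        = (fun A : Matrix (Fin n) (Fin n) ℂ => star A * A) ⁻¹' {1} := by
      ext A
      simp [Matrix.mem_unitaryGroup_iff']
    rw [heq]
    exact IsClosed.preimage (hiso.continuous.mul continuous_id) isClosed_singleton
  refine Metric.isCompact_of_isClosed_isBounded hclosed ?_
  refine isBounded_iff_forall_norm_le.mpr ⟨1, fun U hU => ?_⟩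
  exact le_of_eq (CStarRing.norm_of_mem_unitary hU)

/-- Every contraction is a limit of invertible contractions. -/
lemma exists_approx {A : Matrix (Fin n) (Fin n) ℂ} (hn : 0 < n) (hA : ‖A‖ ≤ 1) :
    ∃ C : ℕ → Matrix (Fin n) (Fin n) ℂ, (∀ m, IsUnit (C m) ∧ ‖C m‖ ≤ 1) ∧
      Tendsto C atTop (nhds A) := by
  haveI : Nonempty (Fin n) := Fin.pos_iff_nonempty.mp hn
  have hfin : (spectrum ℂ A).Finite := Matrix.finite_spectrum A
  have hchoice : ∀ m : ℕ, ∃ δ : ℝ, δ ∈ Set.Ioo (0:ℝ) (1/(m+1)) ∧ ((δ:ℂ) ∉ spectrum ℂ A) := by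
    intro m
    have hinf : (Set.Ioo (0:ℝ) (1/(m+1))).Infinite :=
      Set.Ioo_infinite (by positivity)
    have hpre : ((fun δ : ℝ => (δ:ℂ)) ⁻¹' (spectrum ℂ A)).Finite :=
      hfin.preimage (Complex.ofReal_injective.injOn)
    obtain ⟨δ, hδ⟩ := (hinf.diff hpre).nonempty
    exact ⟨δ, hδ.1, hδ.2⟩
  choose δ hδmem hδspec using hchoice
  have hδpos : ∀ m, 0 < δ m := fun m => (hδmem m).1
  have hδlt : ∀ m, δ m < 1/(m+1) := fun m => (hδmem m).2
  set C : ℕ → Matrix (Fin n) (Fin n) ℂ :=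
    fun m => (((1 + δ m : ℝ) : ℂ))⁻¹ • (A - (δ m : ℂ) • 1) with hCdef
  have hz : ∀ m, ((1 + δ m : ℝ) : ℂ) ≠ 0 := by
    intro m
    simp only [ne_eq, Complex.ofReal_eq_zero]
    intro heq
    linarith [hδpos m]
  refine ⟨C, fun m => ⟨?_, ?_⟩, ?_⟩
  · -- IsUnit (C m)
    have h1 : IsUnit ((algebraMap ℂ (Matrix (Fin n) (Fin n) ℂ)) (δ m : ℂ) - A) :=
      spectrum.notMem_iff.mp (hδspec m)
    have h2 : IsUnit (A - (δ m : ℂ) • 1) := by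
      have := h1.neg
      rwa [neg_sub, Algebra.algebraMap_eq_smul_one] at this
    have h3 : IsUnit ((((1 + δ m : ℝ) : ℂ))⁻¹ • (1 : Matrix (Fin n) (Fin n) ℂ)) := by
      rw [Matrix.isUnit_iff_isUnit_det, det_smul, det_one, mul_one]
      exact (isUnit_iff_ne_zero.mpr (inv_ne_zero (hz m))).pow _
    have : C m = ((((1 + δ m : ℝ) : ℂ))⁻¹ • (1 : Matrix (Fin n) (Fin n) ℂ))
        * (A - (δ m : ℂ) • 1) := by
      rw [Matrix.smul_mul, Matrix.one_mul]
    rw [this]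
    exact h3.mul h2
  · -- norm bound
    have hone : ‖(1 : Matrix (Fin n) (Fin n) ℂ)‖ = 1 := CStarRing.norm_one
    have : ‖C m‖ = (1 + δ m)⁻¹ * ‖A - (δ m : ℂ) • 1‖ := by
      rw [hCdef]
      simp only [norm_smul, norm_inv, Complex.norm_real, Real.norm_eq_abs]
      rw [abs_of_pos (by linarith [hδpos m])]
    rw [this]
    have hb : ‖A - (δ m : ℂ) • 1‖ ≤ 1 + δ m := by
      calc ‖A - (δ m : ℂ) • 1‖ ≤ ‖A‖ + ‖(δ m : ℂ) • (1 : Matrix (Fin n) (Fin n) ℂ)‖ :=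
            norm_sub_le _ _
        _ ≤ 1 + δ m := by
            rw [norm_smul, hone, mul_one, Complex.norm_real, Real.norm_eq_abs,
              abs_of_pos (hδpos m)]
            exact add_le_add_left hA _
    calc (1 + δ m)⁻¹ * ‖A - (δ m : ℂ) • 1‖ ≤ (1 + δ m)⁻¹ * (1 + δ m) := by
          apply mul_le_mul_of_nonneg_left hb
          exact inv_nonneg.mpr (by linarith [hδpos m])
      _ = 1 := by
          rw [inv_mul_cancel₀ (by linarith [hδpos m] : (1:ℝ) + δ m ≠ 0)]
  · -- convergence
    have hδ0 : Tendsto δ atTop (nhds 0) := by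
      apply squeeze_zero (fun m => (hδpos m).le) (fun m => (hδlt m).le)
      exact tendsto_one_div_add_atTop_nhds_zero_nat
    have hf : ContinuousAt (fun d : ℝ =>
        (((1 + d : ℝ) : ℂ))⁻¹ • (A - (d : ℂ) • 1)) 0 := by
      apply ContinuousAt.fun_smul
      · exact ((Complex.continuous_ofReal.comp (continuous_const.add continuous_id)).continuousAt).inv₀
          (by norm_num)
      · exact (continuous_const.sub ((Complex.continuous_ofReal.smul
          continuous_const))).continuousAt
    have h0 : (((1 + (0:ℝ) : ℝ) : ℂ))⁻¹ • (A - ((0:ℝ) : ℂ) • 1) = A := by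
      norm_num
    have := (hf.tendsto).comp hδ0
    rw [h0] at this
    exact this

end RussoDyeAux

end RussoDyeAux

/-- the closed unit ball of the operator norm on `Mₙ(ℂ)` is the convex
hull of the set of unitary matrices. -/
theorem unitBall_eq_convexHull_unitaryGroup (n : ℕ) :
    {A : Matrix (Fin n) (Fin n) ℂ | ‖A‖ ≤ 1} =
      convexHull ℝ {A : Matrix (Fin n) (Fin n) ℂ | A ∈ Matrix.unitaryGroup (Fin n) ℂ} := by
  open Matrix Filter RussoDyeAux in
  rcases Nat.eq_zero_or_pos n with h0 | hn
  · subst h0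
    ext A
    have hA1 : A = 1 := by ext i j; exact i.elim0
    have hA0 : A = 0 := by ext i j; exact i.elim0
    constructor
    · intro _
      apply subset_convexHull ℝ _
      show A ∈ Matrix.unitaryGroup (Fin 0) ℂ
      rw [hA1]
      exact one_mem _
    · intro _
      show ‖A‖ ≤ 1
      rw [hA0, norm_zero]
      norm_num
  · haveI : Nonempty (Fin n) := Fin.pos_iff_nonempty.mp hn
    apply Set.Subset.antisymm
    · intro A hA
      replace hA : ‖A‖ ≤ 1 := hA
      obtain ⟨C, hC, hCt⟩ := exists_approx hn hA
      choose U hUmem W hWmem hCUW using fun m => mean_of_unitaries hn (hC m).2 (hC m).1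
      obtain ⟨U', hU', φ, hφ, hUconv⟩ := (isCompact_unitary hn).tendsto_subseq hUmem
      obtain ⟨W', hW', ψ, hψ, hWconv⟩ :=
        (isCompact_unitary hn).tendsto_subseq (x := fun k => W (φ k)) (fun k => hWmem (φ k))
      have hU2 : Tendsto (fun k => U (φ (ψ k))) atTop (nhds U') :=
        hUconv.comp hψ.tendsto_atTop
      have hC2 : Tendsto (fun k => C (φ (ψ k))) atTop (nhds A) :=
        hCt.comp ((hφ.comp hψ).tendsto_atTop)
      have hlim : Tendsto (fun k => (1/2 : ℝ) • U (φ (ψ k)) + (1/2 : ℝ) • W (φ (ψ k)))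
          atTop (nhds ((1/2 : ℝ) • U' + (1/2 : ℝ) • W')) :=
        (hU2.const_smul _).add (hWconv.const_smul _)
      have heq : A = (1/2 : ℝ) • U' + (1/2 : ℝ) • W' := by
        refine tendsto_nhds_unique hC2 ?_
        have : (fun k => C (φ (ψ k)))
            = fun k => (1/2 : ℝ) • U (φ (ψ k)) + (1/2 : ℝ) • W (φ (ψ k)) := by
          funext k
          exact hCUW _
        rw [this]
        exact hlim
      rw [heq]
      exact (convex_convexHull ℝ _) (subset_convexHull ℝ _ hU') (subset_convexHull ℝ _ hW')
        (by norm_num) (by norm_num) (by norm_num)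
    · refine convexHull_min ?_ ?_
      · intro Q hQ
        exact le_of_eq (CStarRing.norm_of_mem_unitary hQ)
      · have hball : {A : Matrix (Fin n) (Fin n) ℂ | ‖A‖ ≤ 1} = Metric.closedBall 0 1 := by
          ext A
          simp [Metric.mem_closedBall, dist_zero_right]
        rw [hball]
        exact convex_closedBall 0 1
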